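/- Let n ≥ 2 and k ≥ 1. Then the ℂ-vector space Hom_R(m^k, R/m^k) of R-module homomorphisms from m^k to R/m^k has dimension C(n+k−1, n−1) · C(n+k−2, n−1). -/

import Mathlib

open MvPolynomial

noncomputable section

/-- `R n = ℂ[x_1, …, x_n]`. -/
abbrev R (n : ℕ) : Type := MvPolynomial (Fin n) ℂ

/-- `m = (x_1, …, x_n)`, the ideal generated by the variables. -/
def mId (n : ℕ) : Ideal (R n) := Ideal.span (Set.range MvPolynomial.X)

namespace HomDim

variable {n k : ℕ}

/-! ### degree basics -/

lemma degree_add (a b : Fin n →₀ ℕ) : (a+b).degree = a.degree + b.degree := by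
  simp [Finsupp.degree_eq_weight_one, map_add]

lemma degree_single (i : Fin n) (m : ℕ) : (Finsupp.single i m).degree = m := by
  simp [Finsupp.degree_eq_weight_one, Finsupp.weight_apply, Finsupp.sum_single_index]

lemma degree_mono {a b : Fin n →₀ ℕ} (h : a ≤ b) : a.degree ≤ b.degree := by
  obtain ⟨c, rfl⟩ := le_iff_exists_add.mp h
  simp [degree_add]

lemma degree_tsub {a d : Fin n →₀ ℕ} (h : a ≤ d) : (d - a).degree + a.degree = d.degree := by
  rw [← degree_add, tsub_add_cancel_of_le h]

lemma exists_lt_of_ne {a b : Fin n →₀ ℕ} (hle : a ≤ b) (hne : a ≠ b) : ∃ i, a i < b i := by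
  by_contra h
  push_neg at h
  exact hne (le_antisymm hle fun i => h i)

lemma eq_of_le_of_degree_eq {a b : Fin n →₀ ℕ} (hle : a ≤ b) (hdeg : a.degree = b.degree) :
    a = b := by
  obtain ⟨c, rfl⟩ := le_iff_exists_add.mp hle
  rw [degree_add, left_eq_add, Finsupp.degree_eq_zero_iff] at hdeg
  rw [hdeg, add_zero]

lemma exists_lt_of_degree_lt {a b : Fin n →₀ ℕ} (h : a.degree < b.degree) : ∃ i, a i < b i := by
  by_contra hc
  push_neg at hc
  exact absurd (degree_mono (fun i => hc i)) (not_le.mpr h)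

/-- splitting: any `d` of degree ≥ k has a sub-finsupp of degree exactly k. -/
lemma exists_le_degree (k : ℕ) : ∀ d : Fin n →₀ ℕ, k ≤ d.degree → ∃ a ≤ d, a.degree = k := by
  induction k with
  | zero => exact fun d _ => ⟨0, zero_le, map_zero _⟩
  | succ k ih =>
    intro d hd
    obtain ⟨a, ha, hdeg⟩ := ih d (le_trans (Nat.le_succ k) hd)
    have hne : a ≠ d := fun h => by subst h; omega
    obtain ⟨i, hi⟩ := exists_lt_of_ne ha hne
    refine ⟨a + Finsupp.single i 1, ?_, by simp [degree_add, degree_single, hdeg]⟩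
    intro j
    rcases eq_or_ne j i with rfl | hji
    · simpa [Finsupp.single_apply] using hi
    · simpa [Finsupp.single_apply, hji.symm] using ha j

lemma exists_decomp_of_pos {a : Fin n →₀ ℕ} {i : Fin n} (h : 0 < a i) :
    ∃ a₀ : Fin n →₀ ℕ, a = a₀ + Finsupp.single i 1 ∧ a₀ i + 1 = a i ∧
      a₀.degree + 1 = a.degree := by
  have hle : Finsupp.single i 1 ≤ a := by
    intro j
    rcases eq_or_ne j i with rfl | hji
    · simp [Finsupp.single_apply]; omega
    · simp [Finsupp.single_apply, hji.symm]
  refine ⟨a - Finsupp.single i 1, ?_, ?_, ?_⟩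
  · rw [tsub_add_cancel_of_le hle]
  · have h2 := hle i
    simp only [Finsupp.tsub_apply, Finsupp.single_eq_same] at *
    omega
  · have := degree_tsub hle
    rw [degree_single] at this
    omega

/-! ### the ideal `m^k` -/

/-- The ideal of polynomials all of whose monomials have degree at least `k`. -/
def Jdeg (n k : ℕ) : Ideal (R n) where
  carrier := {f | ∀ d ∈ f.support, k ≤ d.degree}
  zero_mem' := by simp
  add_mem' := by
    intro f g hf hg d hd
    rcases Finset.mem_union.mp (Finsupp.support_add hd) with h | h
    · exact hf d h
    · exact hg d h
  smul_mem' := by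
    classical
    intro p f hf d hd
    rw [smul_eq_mul] at hd
    obtain ⟨d1, hd1, d2, hd2, rfl⟩ := Finset.mem_add.mp (support_mul p f hd)
    calc k ≤ d2.degree := hf d2 hd2
    _ ≤ (d1 + d2).degree := by rw [degree_add]; omega

lemma mem_Jdeg {f : R n} : f ∈ Jdeg n k ↔ ∀ d ∈ f.support, k ≤ d.degree := Iff.rfl

lemma X_mem_mId (i : Fin n) : (X i : R n) ∈ mId n := Ideal.subset_span ⟨i, rfl⟩

lemma monomial_one_mem : ∀ (s : ℕ) (d : Fin n →₀ ℕ), d.degree = s →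
    monomial d (1:ℂ) ∈ mId n ^ s := by
  intro s
  induction s with
  | zero => intro d _; simp [Ideal.one_eq_top]
  | succ s ih =>
    intro d hd
    obtain ⟨i, _⟩ : ∃ i, 0 < d i := by
      by_contra h
      push_neg at h
      have : d = 0 := Finsupp.ext fun j => by
        have := h j
        simp only [Finsupp.coe_zero, Pi.zero_apply]
        omega
      rw [this] at hd; simp at hd
    obtain ⟨d₀, hdec, _, hdeg⟩ := exists_decomp_of_pos ‹0 < d i›
    have : monomial d (1:ℂ) = monomial d₀ 1 * X i := by
      rw [X, monomial_mul, mul_one, ← hdec]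
    rw [this, pow_succ]
    exact Ideal.mul_mem_mul (ih _ (by omega)) (X_mem_mId i)

lemma monomial_mem_pow {d : Fin n →₀ ℕ} (c : ℂ) (hd : k ≤ d.degree) :
    monomial d c ∈ mId n ^ k := by
  obtain ⟨a, ha, hdeg⟩ := exists_le_degree k d hd
  have : monomial d c = monomial (d - a) c * monomial a 1 := by
    rw [monomial_mul, mul_one, tsub_add_cancel_of_le ha]
  rw [this]
  exact Ideal.mul_mem_left _ _ (monomial_one_mem k a hdeg)

lemma pow_le_Jdeg : mId n ^ k ≤ Jdeg n k := by
  induction k with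
  | zero => intro f _; rw [mem_Jdeg]; intro d _; exact Nat.zero_le _
  | succ k ih =>
    rw [pow_succ, Ideal.mul_le]
    intro f hf g hg
    rw [mem_Jdeg]
    classical
    intro d hd
    obtain ⟨d1, hd1, d2, hd2, rfl⟩ := Finset.mem_add.mp (support_mul f g hd)
    have h1 : k ≤ d1.degree := mem_Jdeg.mp (ih hf) d1 hd1
    have h2 : 1 ≤ d2.degree := by
      have hg1 : mId n ≤ Jdeg n 1 := by
        rw [mId, Ideal.span_le]
        rintro _ ⟨i, rfl⟩
        rw [SetLike.mem_coe, mem_Jdeg]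
        intro d hd
        rw [support_X, Finset.mem_singleton] at hd
        subst hd
        rw [degree_single]
      exact mem_Jdeg.mp (hg1 hg) d2 hd2
    rw [degree_add]; omega

lemma mem_pow_iff {f : R n} : f ∈ mId n ^ k ↔ ∀ d ∈ f.support, k ≤ d.degree := by
  constructor
  · intro hf
    exact mem_Jdeg.mp (pow_le_Jdeg hf)
  · intro h
    rw [← support_sum_monomial_coeff f]
    exact Submodule.sum_mem _ fun d hd => monomial_mem_pow _ (h d hd)

lemma mem_pow_iff_coeff {f : R n} :
    f ∈ mId n ^ k ↔ ∀ β : Fin n →₀ ℕ, β.degree < k → coeff β f = 0 := by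
  rw [mem_pow_iff]
  constructor
  · intro h β hβ
    by_contra hc
    have := h β (by rwa [MvPolynomial.mem_support_iff])
    omega
  · intro h d hd
    rw [MvPolynomial.mem_support_iff] at hd
    by_contra hc
    exact hd (h d (by omega))

lemma pow_eq_span :
    mId n ^ k = Ideal.span ((fun d => monomial d (1:ℂ)) '' {d : Fin n →₀ ℕ | d.degree = k}) := by
  apply le_antisymm
  · intro f hf
    rw [mem_ideal_span_monomial_image]
    intro d hd
    exact exists_le_degree k d (mem_pow_iff.mp hf d hd) |>.imp fun a ⟨h1, h2⟩ => ⟨h2, h1⟩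
  · rw [Ideal.span_le]
    rintro _ ⟨d, hd, rfl⟩
    exact monomial_mem_pow 1 (le_of_eq hd.symm)

/-! ### coefficient functionals on the quotient -/

/-- The coefficient functional on the quotient `R/m^k`, defined (as `0` junk) for all `β`,
meaningful for `β.degree < k`. -/
def cL (n k : ℕ) (β : Fin n →₀ ℕ) : (R n ⧸ mId n ^ k) →ₗ[ℂ] ℂ :=
  if h : β.degree < k then
    (Submodule.liftQ ((mId n ^ k).restrictScalars ℂ) (lcoeff ℂ β)
      (fun f hf => mem_pow_iff_coeff.mp hf β h)) ∘ₗ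
    ((Submodule.Quotient.restrictScalarsEquiv ℂ (mId n ^ k)).symm :
      (R n ⧸ mId n ^ k) →ₗ[ℂ] _)
  else 0

lemma cL_mk {β : Fin n →₀ ℕ} (h : β.degree < k) (f : R n) :
    cL n k β (Submodule.Quotient.mk f) = coeff β f := by
  rw [cL, dif_pos h]
  simp only [LinearMap.coe_comp, LinearEquiv.coe_coe, Function.comp_apply,
    Submodule.Quotient.restrictScalarsEquiv_symm_mk]
  rfl

lemma cL_X_smul {β : Fin n →₀ ℕ} (h : β.degree + 1 < k) (j : Fin n)
    (u : R n ⧸ mId n ^ k) :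
    cL n k (β + Finsupp.single j 1) ((X j : R n) • u) = cL n k β u := by
  obtain ⟨f, rfl⟩ := Submodule.Quotient.mk_surjective _ u
  have : (X j : R n) • Submodule.Quotient.mk f
      = (Submodule.Quotient.mk (X j * f) : R n ⧸ mId n ^ k) := by
    rw [← Submodule.Quotient.mk_smul, smul_eq_mul]
  rw [this, cL_mk (by rw [degree_add, degree_single]; omega),
    cL_mk (by omega), add_comm β, coeff_X_mul]

lemma cL_X_smul' {β : Fin n →₀ ℕ} (h : β.degree < k) (i : Fin n)
    (u : R n ⧸ mId n ^ k) :
    cL n k β ((X i : R n) • u)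
      = if 0 < β i then cL n k (β - Finsupp.single i 1) u else 0 := by
  classical
  obtain ⟨f, rfl⟩ := Submodule.Quotient.mk_surjective _ u
  have : (X i : R n) • Submodule.Quotient.mk f
      = (Submodule.Quotient.mk (X i * f) : R n ⧸ mId n ^ k) := by
    rw [← Submodule.Quotient.mk_smul, smul_eq_mul]
  rw [this, cL_mk h, coeff_X_mul']
  have hd : (β - Finsupp.single i 1).degree < k :=
    lt_of_le_of_lt (degree_mono tsub_le_self) h
  by_cases hi : i ∈ β.support
  · rw [if_pos hi, if_pos (by simpa [Finsupp.mem_support_iff, pos_iff_ne_zero] using hi),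
      cL_mk hd]
  · rw [if_neg hi, if_neg (by simpa [Finsupp.mem_support_iff, pos_iff_ne_zero] using hi)]

/-! ### values of a homomorphism on monomial generators -/

section PhiSection
variable (φ : ↥(mId n ^ k) →ₗ[R n] (R n ⧸ mId n ^ k))

/-- Value of `φ` on the monomial `x^α` (junk `0` if `α` has degree `< k`). -/
def val (α : Fin n →₀ ℕ) : R n ⧸ mId n ^ k :=
  if h : k ≤ α.degree then φ ⟨monomial α 1, monomial_mem_pow 1 h⟩ else 0

lemma X_smul_val {α : Fin n →₀ ℕ} (hα : k ≤ α.degree) (j : Fin n) :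
    (X j : R n) • val φ α = val φ (α + Finsupp.single j 1) := by
  rw [val, dif_pos hα, val, dif_pos (by rw [degree_add, degree_single]; omega)]
  rw [← LinearMap.map_smul]
  congr 1
  apply Subtype.ext
  show (X j : R n) • (monomial α 1 : R n) = monomial (α + Finsupp.single j 1) 1
  rw [smul_eq_mul, X, monomial_mul, one_mul, add_comm]

lemma val_rel {α₀ : Fin n →₀ ℕ} (hα : k ≤ α₀.degree + 1) (i j : Fin n) :
    (X j : R n) • val φ (α₀ + Finsupp.single i 1) = (X i : R n) • val φ (α₀ + Finsupp.single j 1) := by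
  have hdi : k ≤ (α₀ + Finsupp.single i 1).degree := by
    rw [degree_add, degree_single]; omega
  have hdj : k ≤ (α₀ + Finsupp.single j 1).degree := by
    rw [degree_add, degree_single]; omega
  rw [X_smul_val φ hdi, X_smul_val φ hdj]
  congr 1
  rw [add_assoc, add_assoc, add_comm (Finsupp.single i 1)]

/-- key step: trading an `i` for a `j` in both the generator and the coefficient index. -/
lemma step {α₀ β : Fin n →₀ ℕ} (hα : k ≤ α₀.degree + 1) (hβ : β.degree + 2 ≤ k)
    (i j : Fin n) (hij : j ≠ i) :
    cL n k β (val φ (α₀ + Finsupp.single i 1))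
      = if 0 < β i then
          cL n k (β + Finsupp.single j 1 - Finsupp.single i 1)
            (val φ (α₀ + Finsupp.single j 1))
        else 0 := by
  have h1 : β.degree + 1 < k := by omega
  rw [← cL_X_smul h1 j, val_rel φ hα i j,
    cL_X_smul' (by rw [degree_add, degree_single]; omega) i]
  have h2 : (β + Finsupp.single j 1 : Fin n →₀ ℕ) i = β i := by
    simp [Finsupp.single_apply, hij]
  rw [h2]

/-- The main inductive vanishing argument. -/
lemma vanish (hn : 2 ≤ n) :
    ∀ (t : ℕ) (α β : Fin n →₀ ℕ) (i : Fin n), α.degree = k → β.degree + 2 ≤ k →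
      β i < α i → β i ≤ t → cL n k β (val φ α) = 0 := by
  intro t
  induction t with
  | zero =>
    intro α β i hα hβ hlt ht
    obtain ⟨j, hij⟩ : ∃ j : Fin n, j ≠ i := by
      have : Nontrivial (Fin n) := Fin.nontrivial_iff_two_le.mpr hn
      exact exists_ne i
    obtain ⟨α₀, rfl, _, hdeg⟩ := exists_decomp_of_pos (by omega : 0 < α i)
    have hA : k ≤ α₀.degree + 1 := by omega
    rw [step φ hA hβ i j hij, if_neg (by omega)]
  | succ t ih =>
    intro α β i hα hβ hlt ht
    rcases Nat.lt_or_ge (β i) (t + 1) with h | h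
    · exact ih α β i hα hβ hlt (by omega)
    · have hβi : β i = t + 1 := by omega
      obtain ⟨j, hij⟩ : ∃ j : Fin n, j ≠ i := by
        have : Nontrivial (Fin n) := Fin.nontrivial_iff_two_le.mpr hn
        exact exists_ne i
      obtain ⟨α₀, rfl, hα₀i, hdeg⟩ := exists_decomp_of_pos (by omega : 0 < α i)
      have hA : k ≤ α₀.degree + 1 := by omega
      rw [step φ hA hβ i j hij, if_pos (by omega)]
      obtain ⟨β₀, hβdec, hβ₀i, hβdeg⟩ := exists_decomp_of_pos (by omega : 0 < β i)
      have hβ' : β + Finsupp.single j 1 - Finsupp.single i 1 = β₀ + Finsupp.single j 1 := by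
        rw [hβdec, add_right_comm, add_tsub_cancel_right]
      rw [hβ']
      apply ih (α₀ + Finsupp.single j 1) (β₀ + Finsupp.single j 1) i
      · rw [degree_add, degree_single]; omega
      · rw [degree_add, degree_single]; omega
      · have h1 : (β₀ + Finsupp.single j 1 : Fin n →₀ ℕ) i = β₀ i := by
          simp [Finsupp.single_apply, hij]
        have h2 : (α₀ + Finsupp.single j 1 : Fin n →₀ ℕ) i = α₀ i := by
          simp [Finsupp.single_apply, hij]
        omega
      · have h1 : (β₀ + Finsupp.single j 1 : Fin n →₀ ℕ) i = β₀ i := by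
          simp [Finsupp.single_apply, hij]
        omega

lemma low_coeff_vanish (hn : 2 ≤ n) {α β : Fin n →₀ ℕ} (hα : α.degree = k)
    (hβ : β.degree + 2 ≤ k) : cL n k β (val φ α) = 0 := by
  obtain ⟨i, hi⟩ := exists_lt_of_degree_lt (show β.degree < α.degree by omega)
  exact vanish φ hn (β i) α β i hα hβ hi le_rfl

end PhiSection

/-! ### injectivity -/

lemma val_eq_zero (hn : 2 ≤ n) (hk : 1 ≤ k) (φ : ↥(mId n ^ k) →ₗ[R n] (R n ⧸ mId n ^ k))
    (h : ∀ α β : Fin n →₀ ℕ, α.degree = k → β.degree + 1 = k → cL n k β (val φ α) = 0)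
    {α : Fin n →₀ ℕ} (hα : α.degree = k) : val φ α = 0 := by
  obtain ⟨f, hf⟩ := Submodule.Quotient.mk_surjective _ (val φ α)
  rw [← hf, Submodule.Quotient.mk_eq_zero, mem_pow_iff_coeff]
  intro β hβ
  have hc : coeff β f = cL n k β (val φ α) := by rw [← hf, cL_mk hβ]
  rcases Nat.lt_or_ge (β.degree + 1) k with h2 | h2
  · rw [hc, low_coeff_vanish φ hn hα (by omega)]
  · rw [hc, h α β hα (by omega)]

lemma hom_eq_zero (φ : ↥(mId n ^ k) →ₗ[R n] (R n ⧸ mId n ^ k))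
    (h : ∀ α : Fin n →₀ ℕ, α.degree = k → val φ α = 0) : φ = 0 := by
  have hK : mId n ^ k ≤ Submodule.map (mId n ^ k).subtype (LinearMap.ker φ) := by
    nth_rewrite 1 [pow_eq_span]
    rw [Ideal.span_le]
    rintro _ ⟨d, hd, rfl⟩
    refine ⟨⟨monomial d 1, monomial_mem_pow 1 (le_of_eq hd.symm)⟩, ?_, rfl⟩
    simp only [SetLike.mem_coe, LinearMap.mem_ker]
    have := h d hd
    rw [val, dif_pos (le_of_eq hd.symm)] at this
    exact this
  refine LinearMap.ext fun x => ?_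
  obtain ⟨y, hy, hyx⟩ := hK x.2
  have : y = x := Subtype.ext hyx
  subst this
  simp only [SetLike.mem_coe, LinearMap.mem_ker] at hy
  rw [hy, LinearMap.zero_apply]

/-! ### the finite types of monomials -/

def Sk (n k : ℕ) : Type := {d : Fin n →₀ ℕ // d.degree = k}

lemma degree_eq_card (d : Fin n →₀ ℕ) : d.degree = Multiset.card d.toMultiset := by
  rw [Finsupp.card_toMultiset]
  rfl

def skEquiv (n k : ℕ) : Sk n k ≃ Sym (Fin n) k where
  toFun d := ⟨d.1.toMultiset, by rw [← degree_eq_card, d.2]⟩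
  invFun m := ⟨m.1.toFinsupp, by rw [degree_eq_card, Multiset.toFinsupp_toMultiset, m.2]⟩
  left_inv d := Subtype.ext (Finsupp.toMultiset_toFinsupp d.1)
  right_inv m := Subtype.ext (Multiset.toFinsupp_toMultiset m.1)

instance : Fintype (Sk n k) := Fintype.ofEquiv _ (skEquiv n k).symm

lemma card_Sk : Fintype.card (Sk n k) = (n + k - 1).choose k := by
  rw [Fintype.card_congr (skEquiv n k), Sym.card_sym_eq_choose, Fintype.card_fin]

/-! ### the comparison map Φ -/

def Phi (n k : ℕ) : (↥(mId n ^ k) →ₗ[R n] (R n ⧸ mId n ^ k)) →ₗ[ℂ]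
    ((Sk n k × Sk n (k-1)) → ℂ) where
  toFun φ p := cL n k p.2.1 (φ ⟨monomial p.1.1 1, monomial_mem_pow 1 (le_of_eq p.1.2.symm)⟩)
  map_add' φ ψ := by funext p; simp
  map_smul' c φ := by funext p; simp

lemma Phi_injective (hn : 2 ≤ n) (hk : 1 ≤ k) : Function.Injective (Phi n k) := by
  rw [injective_iff_map_eq_zero]
  intro φ hφ
  apply hom_eq_zero
  intro α hα
  apply val_eq_zero hn hk φ _ hα
  intro α' β hα' hβ
  have := congrFun hφ (⟨α', hα'⟩, ⟨β, by omega⟩)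
  simp only [Phi, LinearMap.coe_mk, AddHom.coe_mk, Pi.zero_apply] at this
  rw [val, dif_pos (le_of_eq hα'.symm)]
  exact this

/-! ### surjectivity: the construction -/

def split (d : Fin n →₀ ℕ) (h : k ≤ d.degree) : Fin n →₀ ℕ :=
  (exists_le_degree k d h).choose

lemma split_le {d : Fin n →₀ ℕ} (h : k ≤ d.degree) : split d h ≤ d :=
  (exists_le_degree k d h).choose_spec.1

lemma split_degree {d : Fin n →₀ ℕ} (h : k ≤ d.degree) : (split d h).degree = k :=
  (exists_le_degree k d h).choose_spec.2

variable (hk : 1 ≤ k)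

/-- the prescribed image of the monomial `x^d` in `R/m^k`. -/
def gfun (c : Sk n k × Sk n (k-1) → ℂ) (d : Fin n →₀ ℕ) : R n ⧸ mId n ^ k :=
  if h : k ≤ d.degree then
    Submodule.Quotient.mk (∑ β : Sk n (k-1),
      c (⟨split d h, split_degree h⟩, β) • monomial (β.1 + (d - split d h)) 1)
  else 0

/-- if `k ≤ d.degree` is strict, `gfun c d = 0`. -/
lemma gfun_eq_zero (hk : 1 ≤ k) (c : Sk n k × Sk n (k-1) → ℂ) {d : Fin n →₀ ℕ}
    (h : k + 1 ≤ d.degree) : gfun c d = 0 := by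
  rw [gfun, dif_pos (by omega : k ≤ d.degree), Submodule.Quotient.mk_eq_zero]
  apply Submodule.sum_mem
  intro β _
  rw [smul_eq_C_mul]
  apply Ideal.mul_mem_left
  apply monomial_mem_pow
  have h1 := degree_tsub (split_le (by omega : k ≤ d.degree))
  rw [split_degree] at h1
  rw [degree_add, β.2]
  omega

def T (c : Sk n k × Sk n (k-1) → ℂ) : R n →ₗ[ℂ] (R n ⧸ mId n ^ k) :=
  (basisMonomials (Fin n) ℂ).constr ℂ (gfun c)

lemma T_monomial (c : Sk n k × Sk n (k-1) → ℂ) (d : Fin n →₀ ℕ) (r : ℂ) :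
    T c (monomial d r) = r • gfun c d := by
  have h1 : (monomial d r : R n) = r • monomial d 1 := by
    rw [smul_monomial, smul_eq_mul, mul_one]
  rw [h1, map_smul]
  congr 1
  have h2 : (monomial d 1 : R n) = basisMonomials (Fin n) ℂ d := by
    rw [coe_basisMonomials]
  rw [T, h2, Module.Basis.constr_basis]

lemma T_X_mul (hk : 1 ≤ k) (c : Sk n k × Sk n (k-1) → ℂ) (i : Fin n) {f : R n}
    (hf : f ∈ mId n ^ k) : T c (X i * f) = (X i : R n) • T c f := by
  conv_lhs => rw [← support_sum_monomial_coeff f]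
  conv_rhs => rw [← support_sum_monomial_coeff f]
  rw [Finset.mul_sum, map_sum, map_sum, Finset.smul_sum]
  apply Finset.sum_congr rfl
  intro d hd
  have hdeg : k ≤ d.degree := mem_pow_iff.mp hf d hd
  have hXm : (X i : R n) * monomial d (coeff d f) = monomial (d + Finsupp.single i 1) (coeff d f) := by
    rw [X, monomial_mul, one_mul, add_comm]
  rw [hXm, T_monomial, T_monomial]
  have hz1 : gfun c (d + Finsupp.single i 1) = 0 := by
    apply gfun_eq_zero hk
    rw [degree_add, degree_single]
    omega
  have hz2 : (X i : R n) • gfun c d = 0 := by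
    rw [gfun, dif_pos hdeg]
    have : (X i : R n) • (Submodule.Quotient.mk (∑ β : Sk n (k-1),
        c (⟨split d hdeg, split_degree hdeg⟩, β) • monomial (β.1 + (d - split d hdeg)) 1)
        : R n ⧸ mId n ^ k)
        = Submodule.Quotient.mk ((X i : R n) * ∑ β : Sk n (k-1),
        c (⟨split d hdeg, split_degree hdeg⟩, β) • monomial (β.1 + (d - split d hdeg)) 1) := by
      rw [← Submodule.Quotient.mk_smul, smul_eq_mul]
    rw [this, Submodule.Quotient.mk_eq_zero]
    rw [Finset.mul_sum]
    apply Submodule.sum_mem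
    intro β _
    rw [mul_smul_comm, smul_eq_C_mul]
    apply Ideal.mul_mem_left
    have hXm2 : (X i : R n) * monomial (β.1 + (d - split d hdeg)) 1
        = monomial (β.1 + (d - split d hdeg) + Finsupp.single i 1) 1 := by
      rw [X, monomial_mul, one_mul, add_comm]
    rw [hXm2]
    apply monomial_mem_pow
    have h1 := degree_tsub (split_le hdeg)
    rw [split_degree] at h1
    rw [degree_add, degree_add, degree_single, β.2]
    omega
  rw [hz1, smul_zero, smul_comm, hz2, smul_zero]

lemma T_mul (hk : 1 ≤ k) (c : Sk n k × Sk n (k-1) → ℂ) (r : R n) {f : R n}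
    (hf : f ∈ mId n ^ k) : T c (r * f) = r • T c f := by
  let A : Subalgebra ℂ (R n) :=
    { carrier := {r : R n | ∀ f ∈ mId n ^ k, T c (r * f) = r • T c f}
      mul_mem' := by
        intro a b ha hb f hf
        rw [mul_assoc, ha _ (Ideal.mul_mem_left _ _ hf), hb _ hf, smul_smul]
      one_mem' := by intro f hf; rw [one_mul, one_smul]
      add_mem' := by
        intro a b ha hb f hf
        rw [add_mul, map_add, ha _ hf, hb _ hf, add_smul]
      zero_mem' := by intro f hf; rw [zero_mul, map_zero, zero_smul]
      algebraMap_mem' := by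
        intro c' f hf
        rw [← Algebra.smul_def, map_smul, algebraMap_smul] }
  have hA : ∀ r, r ∈ A := by
    intro r
    have htop : Algebra.adjoin ℂ (Set.range (X : Fin n → R n)) = ⊤ := adjoin_range_X
    have : r ∈ Algebra.adjoin ℂ (Set.range (X : Fin n → R n)) := by
      rw [htop]; trivial
    refine Algebra.adjoin_le ?_ this
    rintro _ ⟨i, rfl⟩
    intro f hf
    exact T_X_mul hk c i hf
  exact hA r f hf

def Psi (hk : 1 ≤ k) (c : Sk n k × Sk n (k-1) → ℂ) :
    ↥(mId n ^ k) →ₗ[R n] (R n ⧸ mId n ^ k) where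
  toFun x := T c x.1
  map_add' x y := by rw [Submodule.coe_add, map_add]
  map_smul' r x := by
    simp only [SetLike.val_smul, smul_eq_mul, RingHom.id_apply]
    exact T_mul hk c r x.2

lemma Phi_surjective (hk : 1 ≤ k) : Function.Surjective (Phi n k) := by
  intro c
  refine ⟨Psi hk c, ?_⟩
  funext p
  obtain ⟨α, β⟩ := p
  have hα : k ≤ α.1.degree := le_of_eq α.2.symm
  show cL n k β.1 (T c (monomial α.1 1)) = c (α, β)
  rw [T_monomial, one_smul, gfun, dif_pos hα]
  have hsp : split α.1 hα = α.1 :=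
    eq_of_le_of_degree_eq (split_le hα) (by rw [split_degree, α.2])
  have hsub : α.1 - split α.1 hα = 0 := by rw [hsp, tsub_self]
  have hSk : (⟨split α.1 hα, split_degree hα⟩ : Sk n k) = α := Subtype.ext hsp
  rw [cL_mk (by rw [β.2]; omega)]
  rw [hSk, hsub]
  classical
  rw [coeff_sum]
  have : ∀ β' : Sk n (k-1), β' ∈ (Finset.univ : Finset (Sk n (k-1))) →
      coeff β.1 (c (α, β') • monomial (β'.1 + 0) 1) = if β' = β then c (α, β) else 0 := by
    intro β' _
    rw [add_zero, coeff_smul, coeff_monomial]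
    rcases eq_or_ne β' β with rfl | hne
    · rw [if_pos rfl, if_pos rfl, smul_eq_mul, mul_one]
    · rw [if_neg (fun hc => hne (Subtype.ext hc)), if_neg hne, smul_zero]
  rw [Finset.sum_congr rfl this, Finset.sum_ite_eq' Finset.univ β fun _ => c (α, β),
    if_pos (Finset.mem_univ β)]

lemma final_card (hn : 2 ≤ n) (hk : 1 ≤ k) :
    Fintype.card (Sk n k) * Fintype.card (Sk n (k-1))
      = (n + k - 1).choose (n - 1) * (n + k - 2).choose (n - 1) := by
  rw [card_Sk, card_Sk]
  have h1 : (n + k - 1).choose k = (n + k - 1).choose (n - 1) := by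
    have := Nat.choose_symm (show n - 1 ≤ n + k - 1 by omega)
    rwa [show n + k - 1 - (n - 1) = k by omega] at this
  have h2 : (n + (k-1) - 1).choose (k-1) = (n + k - 2).choose (n - 1) := by
    have := Nat.choose_symm (show n - 1 ≤ n + k - 2 by omega)
    rw [show n + k - 2 - (n - 1) = k - 1 by omega] at this
    rw [show n + (k-1) - 1 = n + k - 2 by omega, this]
  rw [h1, h2]

end HomDim

open HomDim in
theorem dim_hom_power_of_maximal_ideal (n k : ℕ) (hn : 2 ≤ n) (hk : 1 ≤ k) :
    Module.finrank ℂ (↥(mId n ^ k) →ₗ[R n] (R n ⧸ mId n ^ k)) =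
      Nat.choose (n + k - 1) (n - 1) * Nat.choose (n + k - 2) (n - 1) := by
  have e : (↥(mId n ^ k) →ₗ[R n] (R n ⧸ mId n ^ k)) ≃ₗ[ℂ] ((Sk n k × Sk n (k-1)) → ℂ) :=
    LinearEquiv.ofBijective (Phi n k) ⟨Phi_injective hn hk, Phi_surjective hk⟩
  rw [e.finrank_eq, Module.finrank_pi, Fintype.card_prod, final_card hn hk]


end
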